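/- Let B >= 1 be a constant, let n <= m, let p satisfy 8*B*log(m)/n <= p <= 1, and let G be a random bipartite graph sampled from G(n,m,p). Let s = (s_1,...,s_n) be a vector of positive integers with sum_{i=1}^n s_i <= m and max_i s_i / min_i s_i <= B. Then the probability that G contains a left-saturating s-matching is at least 1 - 1/n. -/

import Mathlib

open Finset MeasureTheory
open scoped ENNReal

/-- For a bipartite graph on parts `Fin n` and `Fin m` with adjacency relation `E`, and a
vector `s` of positive integers, `F` is a left-saturating `s`-matching if all its edges
are edges of the graph, every left vertex `i` is incident to exactly `s i` edges of `F`,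
and every right vertex is incident to at most one edge of `F`. -/
def IsLeftSatSMatching {n m : ℕ} (E : Fin n → Fin m → Prop) (s : Fin n → ℕ)
    (F : Finset (Fin n × Fin m)) : Prop :=
  (∀ e ∈ F, E e.1 e.2) ∧
  (∀ i : Fin n, (F.filter fun e => e.1 = i).card = s i) ∧
  (∀ g : Fin m, (F.filter fun e => e.2 = g).card ≤ 1)

lemma hall_to_matching {n m : ℕ} (G : Fin n → Fin m → Bool) (s : Fin n → ℕ)
    (h : ∀ T : Finset (Fin n),
      ∑ i ∈ T, s i ≤ (univ.filter (fun g : Fin m => ∃ i ∈ T, G i g = true)).card) :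
    ∃ F, IsLeftSatSMatching (fun i g => G i g = true) s F := by
  classical
  set ι := Σ i : Fin n, Fin (s i)
  set t : ι → Finset (Fin m) := fun x => univ.filter (fun g => G x.1 g = true) with ht
  have fib : ∀ (A : Finset ι) (i : Fin n), (A.filter (fun x => x.1 = i)).card ≤ s i := by
    intro A i
    have hsub : A.filter (fun x => x.1 = i) ⊆ univ.filter (fun x : ι => x.1 = i) := by
      intro x hx; simp [Finset.mem_filter] at hx ⊢; exact hx.2
    refine (Finset.card_le_card hsub).trans ?_
    have : univ.filter (fun x : ι => x.1 = i) = univ.image (Sigma.mk i) := by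
      ext x
      simp only [Finset.mem_filter, Finset.mem_univ, true_and, Finset.mem_image]
      constructor
      · rintro rfl; exact ⟨x.2, rfl⟩
      · rintro ⟨b, rfl⟩; rfl
    rw [this, Finset.card_image_of_injective _ sigma_mk_injective, card_univ]
    simp
  have key : ∀ A : Finset ι, A.card ≤ (A.biUnion t).card := by
    intro A
    set T := A.image Sigma.fst with hT
    have h1 : A.biUnion t = univ.filter (fun g : Fin m => ∃ i ∈ T, G i g = true) := by
      ext g
      simp only [Finset.mem_biUnion, Finset.mem_filter, Finset.mem_univ, true_and, ht, hT,
        Finset.mem_image]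
      constructor
      · rintro ⟨x, hx, hg⟩; exact ⟨x.1, ⟨x, hx, rfl⟩, hg⟩
      · rintro ⟨i, ⟨x, hx, rfl⟩, hg⟩; exact ⟨x, hx, hg⟩
    have h2 : A.card ≤ ∑ i ∈ T, s i := by
      rw [Finset.card_eq_sum_card_fiberwise (f := Sigma.fst) (fun x hx => Finset.mem_image_of_mem _ hx)]
      exact Finset.sum_le_sum fun i _ => fib A i
    rw [h1]; exact h2.trans (h T)
  obtain ⟨f, hf, hft⟩ := (Finset.all_card_le_biUnion_card_iff_existsInjective' t).mp key
  refine ⟨univ.image (fun x : ι => (x.1, f x)), ?_, ?_, ?_⟩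
  · rintro e he
    simp only [Finset.mem_image] at he
    obtain ⟨x, -, rfl⟩ := he
    have := hft x; simpa [ht] using this
  · intro i
    have hinj : Function.Injective (fun x : ι => (x.1, f x)) := by
      intro a b hab
      exact hf (congrArg Prod.snd hab)
    rw [Finset.filter_image]
    rw [Finset.card_image_of_injective _ hinj]
    have : univ.filter (fun x : ι => x.1 = i) = univ.image (Sigma.mk i) := by
      ext x
      simp only [Finset.mem_filter, Finset.mem_univ, true_and, Finset.mem_image]
      constructor
      · rintro rfl; exact ⟨x.2, rfl⟩
      · rintro ⟨b, rfl⟩; rfl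
    rw [this, Finset.card_image_of_injective _ sigma_mk_injective, card_univ]
    simp
  · intro g
    refine Finset.card_le_one.mpr ?_
    intro a ha b hb
    simp only [Finset.mem_filter, Finset.mem_image] at ha hb
    obtain ⟨⟨x, -, rfl⟩, hx2⟩ := ha
    obtain ⟨⟨y, -, rfl⟩, hy2⟩ := hb
    have : x = y := hf (by simp at hx2 hy2; rw [hx2, hy2])
    rw [this]


lemma prod_ite_pow {α : Type*} [Fintype α] [DecidableEq α] (U : Finset α) (c : ℝ≥0∞) :
    (∏ g : α, if g ∈ U then c else 1) = c ^ U.card := by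
  rw [← Finset.prod_filter, Finset.filter_mem_eq_inter, Finset.univ_inter, Finset.prod_const]

lemma measure_rect {n m : ℕ} (p : ℝ) (hp0 : 0 ≤ p) (hp1 : Real.toNNReal p ≤ 1)
    (T : Finset (Fin n)) (U : Finset (Fin m)) :
    (Measure.pi fun _ : Fin n => Measure.pi fun _ : Fin m =>
        (PMF.bernoulli (Real.toNNReal p) hp1).toMeasure)
      {G : Fin n → Fin m → Bool | ∀ i ∈ T, ∀ g ∈ U, G i g = false}
      = ENNReal.ofReal (1 - p) ^ (T.card * U.card) := by
  classical
  set β := (PMF.bernoulli (Real.toNNReal p) hp1).toMeasure with hβ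
  have hfalse : β {false} = ENNReal.ofReal (1 - p) := by
    rw [hβ, PMF.toMeasure_apply_singleton _ _ (measurableSet_singleton _),
      PMF.bernoulli_apply, Bool.cond_false, ENNReal.ofReal, NNReal.sub_def, NNReal.coe_one, Real.coe_toNNReal _ hp0]
  set ν := (Measure.pi fun _ : Fin m => β) with hν
  have hinner : ν {h : Fin m → Bool | ∀ g ∈ U, h g = false}
      = ENNReal.ofReal (1 - p) ^ U.card := by
    have hset : {h : Fin m → Bool | ∀ g ∈ U, h g = false}
        = Set.pi Set.univ (fun g => if g ∈ U then ({false} : Set Bool) else Set.univ) := by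
      ext h
      simp only [Set.mem_setOf_eq, Set.mem_pi, Set.mem_univ, forall_true_left]
      constructor
      · intro hh g; by_cases hg : g ∈ U <;> simp [hg, hh]
      · intro hh g hg; have := hh g; simp [hg] at this; exact this
    rw [hset, hν, Measure.pi_pi]
    have : ∀ g : Fin m, β (if g ∈ U then ({false} : Set Bool) else Set.univ)
        = if g ∈ U then ENNReal.ofReal (1 - p) else 1 := by
      intro g; by_cases hg : g ∈ U
      · simp only [hg, if_true]; exact hfalse
      · simp only [hg, if_false]; exact measure_univ
    simp_rw [this]
    exact prod_ite_pow U _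
  have houter : {G : Fin n → Fin m → Bool | ∀ i ∈ T, ∀ g ∈ U, G i g = false}
      = Set.pi Set.univ (fun i => if i ∈ T then {h : Fin m → Bool | ∀ g ∈ U, h g = false}
          else Set.univ) := by
    ext G
    simp only [Set.mem_setOf_eq, Set.mem_pi, Set.mem_univ, forall_true_left]
    constructor
    · intro hG i; by_cases hi : i ∈ T <;> simp [hi]; exact hG i hi
    · intro hG i hi; have := hG i; simp [hi] at this; exact this
  rw [houter, Measure.pi_pi]
  have : ∀ i : Fin n, ν (if i ∈ T then {h : Fin m → Bool | ∀ g ∈ U, h g = false} else Set.univ)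
      = if i ∈ T then ENNReal.ofReal (1 - p) ^ U.card else 1 := by
    intro i; by_cases hi : i ∈ T
    · simp only [hi, if_true]; exact hinner
    · simp only [hi, if_false]; exact measure_univ
  simp_rw [this, prod_ite_pow, ← pow_mul, Nat.mul_comm]


lemma keyT (B : ℝ) (hB : 1 ≤ B) (n m t σ : ℕ) (hn : 2 ≤ n) (hnm : n ≤ m)
    (p : ℝ) (hp : 8 * B * Real.log m / n ≤ p) (hp1 : p ≤ 1)
    (ht1 : 1 ≤ t) (htn : t ≤ n) (hσ1 : 1 ≤ σ) (hσm : σ + (n - t) ≤ m)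
    (hσB : (σ : ℝ) ≤ t * B * m / n) :
    (n.choose t : ℝ) * (m.choose (m + 1 - σ)) * (1 - p) ^ (t * (m + 1 - σ))
      ≤ (1 / m) ^ (2 * t + 1) + (1 / m) ^ (2 * (n - t) + 3) := by
  set u : ℕ := m + 1 - σ with hu
  set L := Real.log m with hL
  have hσm' : σ ≤ m := le_trans (Nat.le_add_right _ _) hσm
  have hm2 : 2 ≤ m := le_trans hn hnm
  have hm0 : (0:ℝ) < m := by have : 0 < m := by omega
                             exact_mod_cast this
  have hn0 : (0:ℝ) < n := by exact_mod_cast lt_of_lt_of_le two_pos hn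
  have hL0 : 0 ≤ L := Real.log_nonneg (by exact_mod_cast le_trans one_le_two hm2)
  have hp0 : 0 ≤ p := le_trans (by positivity) hp
  have hexpL : Real.exp L = m := Real.exp_log hm0
  have hmpow : ∀ k : ℕ, (m:ℝ) ^ k = Real.exp (k * L) := by
    intro k; rw [Real.exp_nat_mul, hexpL]
  have hinvpow : ∀ k : ℕ, (1 / (m:ℝ)) ^ k = Real.exp (-(k * L)) := by
    intro k; rw [one_div, inv_pow, hmpow, Real.exp_neg]
  -- basic casts
  have huR : (u:ℝ) = (m:ℝ) + 1 - σ := by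
    have : (u:ℕ) = m + 1 - σ := rfl
    push_cast [hu, Nat.cast_sub (le_trans hσm' (Nat.le_succ m))]
    ring
  have hu1 : (n:ℝ) - t + 1 ≤ u := by
    have h1 : (σ:ℝ) + ((n:ℝ) - t) ≤ m := by
      have := hσm
      have h2 : ((σ + (n - t) : ℕ) : ℝ) ≤ m := by exact_mod_cast this
      push_cast [Nat.cast_sub htn] at h2
      linarith [h2]
    rw [huR]; linarith
  have htR1 : (1:ℝ) ≤ t := by exact_mod_cast ht1
  have hσR1 : (1:ℝ) ≤ σ := by exact_mod_cast hσ1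
  have hnmR : (n:ℝ) ≤ m := by exact_mod_cast hnm
  -- bound (1-p)^(t*u) by exp
  have hbexp : (1 - p) ^ (t * u) ≤ Real.exp (-(p * ((t:ℝ) * u))) := by
    have h1 : (1 - p) ≤ Real.exp (-p) := by
      have := Real.add_one_le_exp (-p); linarith
    have h2 : (0:ℝ) ≤ 1 - p := by linarith
    calc (1 - p) ^ (t * u) ≤ (Real.exp (-p)) ^ (t * u) := pow_le_pow_left₀ h2 h1 _
      _ = Real.exp (-(p * ((t:ℝ) * u))) := by
          rw [← Real.exp_nat_mul]; congr 1; push_cast; ring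
  -- lower bound for p * t * u
  have hptu : 8 * B * L / n * ((t:ℝ) * u) ≤ p * ((t:ℝ) * u) := by
    apply mul_le_mul_of_nonneg_right hp
    positivity
  have huR0 : (0:ℝ) ≤ u := by positivity
  have htR0 : (0:ℝ) ≤ t := by positivity
  have hcast_tu : ((t * u : ℕ) : ℝ) = (t:ℝ) * u := by push_cast; ring
  have hpw0 : (0:ℝ) ≤ (1 - p) ^ (t * u) := pow_nonneg (by linarith) _
  rcases le_or_gt (2 * B * t) (n:ℝ) with hcase | hcase
  · -- small t case
    have b1 : (n.choose t : ℝ) ≤ Real.exp ((t:ℝ) * L) := by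
      rw [← hmpow]
      calc (n.choose t : ℝ) ≤ (n:ℝ) ^ t := by exact_mod_cast Nat.choose_le_pow n t
        _ ≤ (m:ℝ) ^ t := pow_le_pow_left₀ (by positivity) hnmR t
    have hsymm : m.choose u = m.choose (σ - 1) := by
      have h1 : u ≤ m := by omega
      have h2 : m - u = σ - 1 := by omega
      rw [← h2, Nat.choose_symm h1]
    have b2 : (m.choose u : ℝ) ≤ Real.exp (((σ:ℝ) - 1) * L) := by
      have : ((σ:ℝ) - 1) = ((σ - 1 : ℕ) : ℝ) := by
        rw [Nat.cast_sub hσ1]; norm_num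
      rw [this, ← hmpow, hsymm]
      exact_mod_cast Nat.choose_le_pow m (σ - 1)
    have hσhalf : (σ:ℝ) ≤ (m:ℝ) / 2 := by
      have : (t:ℝ) * B * m / n ≤ (m:ℝ) / 2 := by
        rw [div_le_div_iff₀ hn0 two_pos]
        have h := mul_le_mul_of_nonneg_right hcase (le_of_lt hm0)
        linarith
      linarith [hσB]
    have huhalf : (m:ℝ) / 2 ≤ u := by rw [huR]; linarith
    have e1 : (σ:ℝ) * n ≤ (t:ℝ) * B * m := (le_div_iff₀ hn0).mp hσB
    have e2 : (t:ℝ) * n ≤ B * ((t:ℝ) * m) := by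
      have ha := mul_le_mul_of_nonneg_left hnmR htR0
      have hb := mul_le_mul_of_nonneg_right hB (by positivity : (0:ℝ) ≤ (t:ℝ) * m)
      linarith
    have step1 : (3 * (t:ℝ) + σ) * n ≤ 4 * B * t * m := by nlinarith [e1, e2]
    have step2 : 4 * B * (t:ℝ) * m * L ≤ 8 * B * L * t * u := by
      have h := mul_le_mul_of_nonneg_left huhalf (show (0:ℝ) ≤ 8 * B * L * t by positivity)
      linarith
    have key : (3 * (t:ℝ) + σ) * L ≤ p * ((t:ℝ) * u) := by
      refine le_trans ?_ hptu
      rw [div_mul_eq_mul_div, le_div_iff₀ hn0]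
      calc (3 * (t:ℝ) + σ) * L * n = ((3 * (t:ℝ) + σ) * n) * L := by ring
        _ ≤ (4 * B * t * m) * L := by
            apply mul_le_mul_of_nonneg_right step1 hL0
        _ ≤ 8 * B * L * t * u := by linarith [step2]
        _ = 8 * B * L * ((t:ℝ) * u) := by ring
    calc (n.choose t : ℝ) * (m.choose u) * (1 - p) ^ (t * u)
        ≤ Real.exp ((t:ℝ) * L) * Real.exp (((σ:ℝ) - 1) * L) *
            Real.exp (-(p * ((t:ℝ) * u))) := by
          apply mul_le_mul
          · exact mul_le_mul b1 b2 (by positivity) (by positivity)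
          · exact hbexp
          · exact hpw0
          · positivity
      _ = Real.exp ((t:ℝ) * L + ((σ:ℝ) - 1) * L + -(p * ((t:ℝ) * u))) := by
          rw [← Real.exp_add, ← Real.exp_add]
      _ ≤ Real.exp (-(((2 * t + 1 : ℕ) : ℝ) * L)) := by
          apply Real.exp_le_exp.mpr
          push_cast
          linarith [key]
      _ = (1 / (m:ℝ)) ^ (2 * t + 1) := (hinvpow _).symm
      _ ≤ _ := le_add_of_nonneg_right (by positivity)
  · -- large t case
    have b1 : (n.choose t : ℝ) ≤ Real.exp (((n - t : ℕ) : ℝ) * L) := by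
      rw [← hmpow, ← Nat.choose_symm htn]
      calc ((n.choose (n - t)) : ℝ) ≤ (n:ℝ) ^ (n - t) := by
            exact_mod_cast Nat.choose_le_pow n (n - t)
        _ ≤ (m:ℝ) ^ (n - t) := pow_le_pow_left₀ (by positivity) hnmR _
    have b2 : (m.choose u : ℝ) ≤ Real.exp ((u:ℝ) * L) := by
      rw [← hmpow]
      exact_mod_cast Nat.choose_le_pow m u
    have hpt : 4 * L ≤ p * t := by
      have h2B : (0:ℝ) < 2 * B := by linarith
      have h8 : 8 * B * L ≤ p * n := (div_le_iff₀ hn0).mp hp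
      have h9 : p * n ≤ p * (2 * B * t) := mul_le_mul_of_nonneg_left (le_of_lt hcase) hp0
      have : 2 * B * (4 * L) ≤ 2 * B * (p * t) := by linarith
      exact le_of_mul_le_mul_left this h2B
    have hntR : ((n - t : ℕ) : ℝ) = (n:ℝ) - t := by
      rw [Nat.cast_sub htn]
    have key : ((n - t : ℕ):ℝ) * L + (u:ℝ) * L + -(p * ((t:ℝ) * u))
        ≤ -(((2 * (n - t) + 3 : ℕ) : ℝ) * L) := by
      have h1 : 4 * L * u ≤ p * ((t:ℝ) * u) := by
        calc 4 * L * (u:ℝ) ≤ (p * t) * u := mul_le_mul_of_nonneg_right hpt huR0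
          _ = p * ((t:ℝ) * u) := by ring
      have h2 : L * ((n:ℝ) - t + 1) ≤ L * u := mul_le_mul_of_nonneg_left hu1 hL0
      push_cast [hntR]
      linarith [h1, h2]
    calc (n.choose t : ℝ) * (m.choose u) * (1 - p) ^ (t * u)
        ≤ Real.exp (((n - t:ℕ):ℝ) * L) * Real.exp ((u:ℝ) * L) *
            Real.exp (-(p * ((t:ℝ) * u))) := by
          apply mul_le_mul
          · exact mul_le_mul b1 b2 (by positivity) (by positivity)
          · exact hbexp
          · exact hpw0
          · positivity
      _ = Real.exp (((n - t:ℕ):ℝ) * L + (u:ℝ) * L + -(p * ((t:ℝ) * u))) := by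
          rw [← Real.exp_add, ← Real.exp_add]
      _ ≤ Real.exp (-(((2 * (n - t) + 3 : ℕ) : ℝ) * L)) := Real.exp_le_exp.mpr key
      _ = (1 / (m:ℝ)) ^ (2 * (n - t) + 3) := (hinvpow _).symm
      _ ≤ _ := le_add_of_nonneg_left (by positivity)

lemma sum_bound (B : ℝ) (hB : 1 ≤ B) (n m : ℕ) (hn : 2 ≤ n) (hnm : n ≤ m)
    (p : ℝ) (hp : 8 * B * Real.log m / n ≤ p) (hp1 : p ≤ 1)
    (s : Fin n → ℕ) (hs : ∀ i, 1 ≤ s i) (hsum : ∑ i, s i ≤ m)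
    (hratio : ∀ i j : Fin n, (s i : ℝ) ≤ B * s j) :
    ∑ T ∈ (univ : Finset (Fin n)).powerset,
      ((m.choose (m + 1 - ∑ i ∈ T, s i) : ℝ) *
        (1 - p) ^ (T.card * (m + 1 - ∑ i ∈ T, s i)))
      ≤ 1 / n := by
  classical
  have hn0 : (0:ℝ) < n := by exact_mod_cast lt_of_lt_of_le two_pos hn
  have hm2 : 2 ≤ m := le_trans hn hnm
  have hm0 : (0:ℝ) < m := by
    have : 0 < m := by omega
    exact_mod_cast this
  have hL0 : 0 ≤ Real.log m := Real.log_nonneg (by exact_mod_cast le_trans one_le_two hm2)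
  have hp0 : 0 ≤ p := le_trans (by positivity) hp
  have h1p : (0:ℝ) ≤ 1 - p := by linarith
  have hinv1 : (1 / (m:ℝ)) ≤ 1 := by
    rw [div_le_one hm0]; exact_mod_cast one_le_two.trans (by exact_mod_cast hm2)
  have hinv0 : (0:ℝ) ≤ 1 / m := by positivity
  set f : Finset (Fin n) → ℝ := fun T =>
    ((m.choose (m + 1 - ∑ i ∈ T, s i) : ℝ) *
      (1 - p) ^ (T.card * (m + 1 - ∑ i ∈ T, s i))) with hf
  have hbound : ∀ j ∈ Finset.range n,
      ∑ T ∈ Finset.powersetCard (j+1) univ, f T ≤ 2 * (1/(m:ℝ))^3 := by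
    intro j hj
    rw [Finset.mem_range] at hj
    set t := j + 1 with htdef
    have ht1 : 1 ≤ t := Nat.le_add_left 1 j
    have htn : t ≤ n := hj
    have hchoosepos : 0 < n.choose t := Nat.choose_pos htn
    have hterm : ∀ T ∈ Finset.powersetCard t (univ : Finset (Fin n)),
        f T ≤ ((1/(m:ℝ))^(2*t+1) + (1/(m:ℝ))^(2*(n-t)+3)) / (n.choose t) := by
      intro T hT
      have hTcard : T.card = t := (Finset.mem_powersetCard.mp hT).2
      set σ := ∑ i ∈ T, s i with hσdef
      have hσ1 : 1 ≤ σ := by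
        calc 1 ≤ T.card := by omega
          _ = ∑ i ∈ T, 1 := by rw [Finset.card_eq_sum_ones]
          _ ≤ σ := Finset.sum_le_sum (fun i _ => hs i)
      have hcompl : σ + ∑ i ∈ Tᶜ, s i = ∑ i, s i := Finset.sum_add_sum_compl T s
      have hcomplcard : Tᶜ.card = n - t := by
        rw [Finset.card_compl, hTcard, Fintype.card_fin]
      have hcomplge : n - t ≤ ∑ i ∈ Tᶜ, s i := by
        calc n - t = Tᶜ.card := hcomplcard.symm
          _ = ∑ i ∈ Tᶜ, 1 := by rw [Finset.card_eq_sum_ones]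
          _ ≤ _ := Finset.sum_le_sum (fun i _ => hs i)
      have hσm : σ + (n - t) ≤ m := by omega
      have hσB : (σ : ℝ) ≤ t * B * m / n := by
        have hsi : ∀ i : Fin n, (s i : ℝ) ≤ B * m / n := by
          intro i
          rw [le_div_iff₀ hn0]
          calc (s i : ℝ) * n = ∑ _j : Fin n, (s i : ℝ) := by
                rw [Finset.sum_const, Finset.card_univ, Fintype.card_fin, nsmul_eq_mul]; ring
            _ ≤ ∑ j : Fin n, B * (s j : ℝ) := Finset.sum_le_sum (fun j _ => hratio i j)
            _ = B * ∑ j : Fin n, (s j : ℝ) := by rw [Finset.mul_sum]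
            _ ≤ B * m := by
                apply mul_le_mul_of_nonneg_left _ (by linarith)
                exact_mod_cast hsum
        calc (σ : ℝ) = ∑ i ∈ T, (s i : ℝ) := by push_cast [hσdef]; rfl
          _ ≤ ∑ _i ∈ T, B * (m:ℝ) / n := Finset.sum_le_sum (fun i _ => hsi i)
          _ = t * (B * m / n) := by
              rw [Finset.sum_const, hTcard, nsmul_eq_mul]
          _ = t * B * m / n := by ring
      have hkey := keyT B hB n m t σ hn hnm p hp hp1 ht1 htn hσ1 hσm hσB
      rw [le_div_iff₀ (by exact_mod_cast hchoosepos : (0:ℝ) < n.choose t)]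
      calc f T * (n.choose t)
          = (n.choose t : ℝ) * (m.choose (m + 1 - σ)) * (1 - p) ^ (t * (m + 1 - σ)) := by
            rw [hf]; simp only [hσdef, hTcard]; ring
        _ ≤ _ := hkey
    calc ∑ T ∈ Finset.powersetCard t univ, f T
        ≤ (Finset.powersetCard t (univ : Finset (Fin n))).card •
            (((1/(m:ℝ))^(2*t+1) + (1/(m:ℝ))^(2*(n-t)+3)) / (n.choose t)) :=
          Finset.sum_le_card_nsmul _ _ _ hterm
      _ = ((1/(m:ℝ))^(2*t+1) + (1/(m:ℝ))^(2*(n-t)+3)) := by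
          rw [Finset.card_powersetCard, Finset.card_univ, Fintype.card_fin, nsmul_eq_mul]
          field_simp
      _ ≤ (1/(m:ℝ))^3 + (1/(m:ℝ))^3 := by
          apply add_le_add
          · exact pow_le_pow_of_le_one hinv0 hinv1 (by omega)
          · exact pow_le_pow_of_le_one hinv0 hinv1 (by omega)
      _ = 2 * (1/(m:ℝ))^3 := by ring
  calc ∑ T ∈ (univ : Finset (Fin n)).powerset, f T
      = ∑ j ∈ Finset.range (n + 1), ∑ T ∈ Finset.powersetCard j univ, f T := by
        rw [Finset.sum_powerset, Finset.card_univ, Fintype.card_fin]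
    _ = (∑ j ∈ Finset.range n, ∑ T ∈ Finset.powersetCard (j+1) univ, f T) +
          ∑ T ∈ Finset.powersetCard 0 (univ : Finset (Fin n)), f T := by
        rw [Finset.sum_range_succ']
    _ ≤ (∑ j ∈ Finset.range n, 2 * (1/(m:ℝ))^3) + 0 := by
        apply add_le_add (Finset.sum_le_sum hbound)
        rw [Finset.powersetCard_zero, Finset.sum_singleton]
        rw [hf]
        simp only [Finset.sum_empty, Finset.card_empty, Nat.sub_zero]
        rw [Nat.choose_eq_zero_of_lt (by omega)]
        simp
    _ = n * (2 * (1/(m:ℝ))^3) := by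
        rw [Finset.sum_const, Finset.card_range, nsmul_eq_mul]; ring
    _ ≤ 1 / n := by
        have hmn : (n:ℝ) ≤ m := by exact_mod_cast hnm
        have hm2R : (2:ℝ) ≤ m := by exact_mod_cast hm2
        have h1 : (n:ℝ) * n ≤ (m:ℝ) * m :=
          mul_le_mul hmn hmn (by positivity) (by positivity)
        have h2 : 2 * ((m:ℝ) * m) ≤ (m:ℝ) * (m * m) := by nlinarith
        have key : 2 * (n:ℝ) * n ≤ (m:ℝ)^3 := by nlinarith [h1, h2]
        have heq : (n:ℝ) * (2 * (1/(m:ℝ))^3) = 2 * (n:ℝ) / (m:ℝ)^3 := by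
          field_simp
        rw [heq, div_le_div_iff₀ (by positivity) hn0]
        nlinarith [key]

/-- Let `B ≥ 1`, `n ≤ m`, and `8·B·log m / n ≤ p ≤ 1`, and let `G` be a random bipartite
graph from the Erdős–Rényi model `G(n,m,p)` (each of the `n·m` edges present
independently with probability `p`).  For any vector `s` of positive integers with
`∑ s_i ≤ m` and `max s_i / min s_i ≤ B`, the probability that `G` contains a
left-saturating `s`-matching is at least `1 - 1/n`. -/
theorem random_graph_sMatching (B : ℝ) (hB : 1 ≤ B) (n m : ℕ) (hnm : n ≤ m)
    (p : ℝ) (hp0 : 8 * B * Real.log m / n ≤ p) (hp1 : p ≤ 1)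
    (s : Fin n → ℕ) (hs : ∀ i, 1 ≤ s i) (hsum : ∑ i, s i ≤ m)
    (hratio : ∀ i j : Fin n, (s i : ℝ) ≤ B * s j) :
    ENNReal.ofReal (1 - 1 / n) ≤
      (Measure.pi fun _ : Fin n => Measure.pi fun _ : Fin m =>
          (PMF.bernoulli (Real.toNNReal p) (Real.toNNReal_le_one.mpr hp1)).toMeasure)
        {G : Fin n → Fin m → Bool |
          ∃ F : Finset (Fin n × Fin m), IsLeftSatSMatching (fun i g => G i g = true) s F} := by
  classical
  set μ := (Measure.pi fun _ : Fin n => Measure.pi fun _ : Fin m =>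
      (PMF.bernoulli (Real.toNNReal p) (Real.toNNReal_le_one.mpr hp1)).toMeasure) with hμ
  rcases Nat.lt_or_ge n 2 with hn2 | hn2
  · interval_cases n
    · -- n = 0
      have hset : {G : Fin 0 → Fin m → Bool |
          ∃ F : Finset (Fin 0 × Fin m), IsLeftSatSMatching (fun i g => G i g = true) s F}
          = Set.univ := by
        ext G
        simp only [Set.mem_setOf_eq, Set.mem_univ, iff_true]
        refine ⟨∅, ?_, ?_, ?_⟩
        · intro e he; simp at he
        · intro i; exact i.elim0
        · intro g; simp
      rw [hset, measure_univ]
      exact ENNReal.ofReal_le_one.mpr (by norm_num)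
    · -- n = 1
      have h0 : (1:ℝ) - 1 / ((1:ℕ):ℝ) = 0 := by norm_num
      rw [h0, ENNReal.ofReal_zero]
      exact zero_le
  · -- main case : 2 ≤ n
    have hm2 : 2 ≤ m := le_trans hn2 hnm
    have hn0 : (0:ℝ) < n := by exact_mod_cast lt_of_lt_of_le two_pos hn2
    have hL0 : 0 ≤ Real.log m := Real.log_nonneg (by exact_mod_cast Nat.one_le_iff_ne_zero.mpr (by omega))
    have hpnn : 0 ≤ p := le_trans (by positivity) hp0
    have h1p : (0:ℝ) ≤ 1 - p := by linarith
    -- the bad event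
    set Bad : Set (Fin n → Fin m → Bool) := {G | ∃ T : Finset (Fin n),
      (univ.filter (fun g : Fin m => ∃ i ∈ T, G i g = true)).card < ∑ i ∈ T, s i} with hBad
    have hms : ∀ S : Set (Fin n → Fin m → Bool), MeasurableSet S := fun S =>
      S.toFinite.measurableSet
    have hsubset : Badᶜ ⊆ {G : Fin n → Fin m → Bool |
        ∃ F : Finset (Fin n × Fin m), IsLeftSatSMatching (fun i g => G i g = true) s F} := by
      intro G hG
      simp only [hBad, Set.mem_compl_iff, Set.mem_setOf_eq, not_exists, not_lt] at hG
      exact hall_to_matching G s hG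
    -- covering family
    set A : Finset (Fin n) → Finset (Fin m) → Set (Fin n → Fin m → Bool) :=
      fun T U => {G | ∀ i ∈ T, ∀ g ∈ U, G i g = false} with hA
    set uu : Finset (Fin n) → ℕ := fun T => m + 1 - ∑ i ∈ T, s i with huu
    have hcover : Bad ⊆ ⋃ T ∈ (univ : Finset (Fin n)).powerset,
        ⋃ U ∈ Finset.powersetCard (uu T) (univ : Finset (Fin m)), A T U := by
      intro G hG
      obtain ⟨T, hT⟩ := hG
      set N := univ.filter (fun g : Fin m => ∃ i ∈ T, G i g = true) with hN
      have hσm : ∑ i ∈ T, s i ≤ m :=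
        le_trans (Finset.sum_le_sum_of_subset (Finset.subset_univ T)) hsum
      have hNc : uu T ≤ (univ \ N).card := by
        rw [Finset.card_sdiff_of_subset (Finset.subset_univ N), Finset.card_univ, Fintype.card_fin]
        simp only [huu]
        omega
      obtain ⟨U, hU, hUcard⟩ := Finset.exists_subset_card_eq hNc
      refine Set.mem_biUnion (Finset.mem_powerset.mpr (Finset.subset_univ T)) ?_
      refine Set.mem_biUnion (Finset.mem_powersetCard.mpr ⟨Finset.subset_univ U, hUcard⟩) ?_
      intro i hi g hg
      have hgN : g ∉ N := by
        have := hU hg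
        rw [Finset.mem_sdiff] at this
        exact this.2
      rw [hN, Finset.mem_filter] at hgN
      push_neg at hgN
      have := hgN (Finset.mem_univ g) i hi
      exact Bool.not_eq_true _ ▸ (by simpa using this)
    -- measure bound
    have hμA : ∀ (T : Finset (Fin n)) (U : Finset (Fin m)),
        μ (A T U) = ENNReal.ofReal (1 - p) ^ (T.card * U.card) := by
      intro T U
      exact measure_rect p hpnn _ T U
    have hBadle : μ Bad ≤ ENNReal.ofReal (1 / n) := by
      calc μ Bad ≤ μ (⋃ T ∈ (univ : Finset (Fin n)).powerset,
            ⋃ U ∈ Finset.powersetCard (uu T) (univ : Finset (Fin m)), A T U) :=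
          measure_mono hcover
        _ ≤ ∑ T ∈ (univ : Finset (Fin n)).powerset,
            μ (⋃ U ∈ Finset.powersetCard (uu T) (univ : Finset (Fin m)), A T U) :=
          measure_biUnion_finset_le _ _
        _ ≤ ∑ T ∈ (univ : Finset (Fin n)).powerset,
            ∑ U ∈ Finset.powersetCard (uu T) (univ : Finset (Fin m)), μ (A T U) :=
          Finset.sum_le_sum (fun T _ => measure_biUnion_finset_le _ _)
        _ = ∑ T ∈ (univ : Finset (Fin n)).powerset,
            ENNReal.ofReal ((m.choose (uu T) : ℝ) * (1 - p) ^ (T.card * uu T)) := by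
          apply Finset.sum_congr rfl
          intro T _
          have : ∀ U ∈ Finset.powersetCard (uu T) (univ : Finset (Fin m)),
              μ (A T U) = ENNReal.ofReal (1 - p) ^ (T.card * uu T) := by
            intro U hU
            rw [hμA T U, (Finset.mem_powersetCard.mp hU).2]
          rw [Finset.sum_congr rfl this, Finset.sum_const, Finset.card_powersetCard,
            Finset.card_univ, Fintype.card_fin, nsmul_eq_mul]
          rw [← ENNReal.ofReal_pow h1p, ← ENNReal.ofReal_natCast (m.choose (uu T)),
            ← ENNReal.ofReal_mul (by positivity)]
        _ = ENNReal.ofReal (∑ T ∈ (univ : Finset (Fin n)).powerset,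
            ((m.choose (uu T) : ℝ) * (1 - p) ^ (T.card * uu T))) := by
          rw [ENNReal.ofReal_sum_of_nonneg]
          intro T _
          have : (0:ℝ) ≤ (1 - p) ^ (T.card * uu T) := pow_nonneg h1p _
          positivity
        _ ≤ ENNReal.ofReal (1 / n) := by
          apply ENNReal.ofReal_le_ofReal
          exact sum_bound B hB n m hn2 hnm p hp0 hp1 s hs hsum hratio
    have hprob : IsProbabilityMeasure μ := by rw [hμ]; infer_instance
    calc ENNReal.ofReal (1 - 1 / n)
        = ENNReal.ofReal 1 - ENNReal.ofReal (1 / n) := ENNReal.ofReal_sub _ (by positivity)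
      _ = 1 - ENNReal.ofReal (1 / n) := by rw [ENNReal.ofReal_one]
      _ ≤ 1 - μ Bad := tsub_le_tsub_left hBadle 1
      _ = μ Set.univ - μ Bad := by rw [measure_univ]
      _ = μ Badᶜ := (measure_compl (hms Bad) (measure_ne_top μ Bad)).symm
      _ ≤ _ := measure_mono hsubset
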